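/- arXiv:1106.2717 — 3 statements merged into one kernel-verified Lean document; each statement's English description precedes it below -/
import Mathlib

section
/- For every L > 0 and all m, μ ∈ ℝ, the absolutely convergent integral (1/√(2πL)) ∫_ℝ exp( −(u − m − L²)²/(2L) − 2uL + μL + 2L³/3 ) · Ai( 2^{−1/3}(2u − μ) ) du equals Ai( 2^{−1/3}(2m − μ) ); in particular the left-hand side does not depend on L. -/
open MeasureTheory Real Filter

open Topology

/-- The Airy function, defined by the conditionally convergent improper integral
`Ai(x) = (1/π) · lim_{T→∞} ∫₀^T cos(t³/3 + x t) dt`. -/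
noncomputable def Ai (x : ℝ) : ℝ :=
  (1 / π) * limUnder atTop (fun T : ℝ => ∫ t in (0:ℝ)..T, Real.cos (t ^ 3 / 3 + x * t))

/-- The auxiliary entire function `exp(i(z³/3 + xz))`. -/
noncomputable def gg (x : ℝ) (z : ℂ) : ℂ := Complex.exp (Complex.I * (z^3/3 + x*z))

lemma gg_expo (x t y : ℝ) :
    Complex.I * (((t:ℂ) + y*Complex.I)^3/3 + x*((t:ℂ) + y*Complex.I))
      = ((-(t^2*y) + y^3/3 - x*y : ℝ) : ℂ) + ((t^3/3 - t*y^2 + x*t : ℝ)) * Complex.I := by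
  have hI : (Complex.I:ℂ)^2 = -1 := Complex.I_sq
  push_cast
  linear_combination (((t:ℂ)^2*y + (x:ℂ)*y - (y:ℂ)^3/3) + (t:ℂ)*y^2*Complex.I
    + ((y:ℂ)^3/3)*Complex.I^2) * hI

lemma gg_eq (x t y : ℝ) :
    gg x ((t:ℂ) + y*Complex.I)
      = (Real.exp (-(t^2*y) + y^3/3 - x*y) : ℂ)
        * Complex.exp (((t^3/3 - t*y^2 + x*t : ℝ)) * Complex.I) := by
  rw [gg, gg_expo, Complex.exp_add, Complex.ofReal_exp]

lemma gg_re (x t y : ℝ) :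
    (gg x ((t:ℂ) + y*Complex.I)).re
      = Real.exp (-(t^2*y) + y^3/3 - x*y) * Real.cos (t^3/3 - t*y^2 + x*t) := by
  rw [gg_eq, Complex.re_ofReal_mul, Complex.exp_ofReal_mul_I_re]

lemma gg_norm (x t y : ℝ) :
    ‖gg x ((t:ℂ) + y*Complex.I)‖ = Real.exp (-(t^2*y) + y^3/3 - x*y) := by
  rw [gg_eq, norm_mul]
  simp [Complex.norm_exp, abs_of_pos (Real.exp_pos _)]
  norm_num [← Complex.ofReal_pow]

lemma gg_diff (x : ℝ) : Differentiable ℂ (gg x) := by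
  apply Differentiable.cexp
  apply Differentiable.const_mul
  fun_prop

lemma gg_cont (x : ℝ) : Continuous (gg x) := (gg_diff x).continuous

lemma gg_integrableOn (x δ : ℝ) (hδ : 0 < δ) :
    IntegrableOn (fun t : ℝ => gg x ((t:ℂ) + δ*Complex.I)) (Set.Ioi 0) := by
  refine Integrable.mono' (g := fun t => Real.exp (δ^3/3 - x*δ) * Real.exp (-δ * t^2)) ?_ ?_ ?_
  · exact ((integrable_exp_neg_mul_sq hδ).const_mul _).restrict
  · exact ((gg_cont x).comp (by fun_prop)).aestronglyMeasurable
  · filter_upwards with t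
    rw [gg_norm, ← Real.exp_add]
    apply Real.exp_le_exp.mpr
    ring_nf
    exact le_refl _

lemma rect (x δ : ℝ) (T : ℝ) :
    (∫ t in (0:ℝ)..T, gg x t)
      = (∫ t in (0:ℝ)..T, gg x ((t:ℂ) + δ*Complex.I))
        - Complex.I * (∫ y in (0:ℝ)..δ, gg x ((T:ℂ) + y*Complex.I))
        + Complex.I * (∫ y in (0:ℝ)..δ, gg x ((y:ℝ)*Complex.I)) := by
  have h := Complex.integral_boundary_rect_eq_zero_of_differentiableOn (gg x) 0
    ((T:ℂ) + δ*Complex.I) ((gg_diff x).differentiableOn)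
  simp only [Complex.add_re, Complex.ofReal_re, Complex.mul_re, Complex.I_re, Complex.I_im,
    Complex.ofReal_im, Complex.add_im, Complex.mul_im, Complex.zero_re, Complex.zero_im] at h
  norm_num at h
  linear_combination h

lemma vert_tendsto (x δ : ℝ) (hδ : 0 < δ) :
    Tendsto (fun T : ℝ => ∫ y in (0:ℝ)..δ, gg x ((T:ℂ) + y*Complex.I)) atTop (𝓝 0) := by
  have heq : ∀ T : ℝ, (∫ y in (0:ℝ)..δ, gg x ((T:ℂ) + y*Complex.I))
      = ∫ y in Set.Ioc (0:ℝ) δ, gg x ((T:ℂ) + y*Complex.I) := fun T =>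
    intervalIntegral.integral_of_le hδ.le
  simp_rw [heq]
  have h0 : (0:ℂ) = ∫ y in Set.Ioc (0:ℝ) δ, (0:ℂ) := by simp
  rw [h0]
  apply MeasureTheory.tendsto_integral_filter_of_dominated_convergence
    (bound := fun _ => Real.exp (δ^3/3 + |x| * δ))
  · filter_upwards with T
    exact (((gg_cont x).comp (by fun_prop)).aestronglyMeasurable).restrict
  · filter_upwards [eventually_ge_atTop (0:ℝ)] with T hT
    filter_upwards [ae_restrict_mem measurableSet_Ioc] with y hy
    rw [gg_norm]
    apply Real.exp_le_exp.mpr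
    have h1 : -(T^2*y) ≤ 0 := neg_nonpos.mpr (mul_nonneg (sq_nonneg T) hy.1.le)
    have h2 : y^3/3 ≤ δ^3/3 := by
      have := pow_le_pow_left₀ hy.1.le hy.2 3
      linarith
    have h3 : -x*y ≤ |x| * δ := by
      calc -x*y ≤ |x| * y := mul_le_mul_of_nonneg_right (neg_le_abs x) hy.1.le
      _ ≤ |x| * δ := mul_le_mul_of_nonneg_left hy.2 (abs_nonneg x)
    linarith
  · exact integrableOn_const (measure_Ioc_lt_top.ne)
  · filter_upwards [ae_restrict_mem measurableSet_Ioc] with y hy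
    rw [tendsto_zero_iff_norm_tendsto_zero]
    have hnorm : (fun T:ℝ => ‖gg x ((T:ℂ) + y*Complex.I)‖)
        = fun T => rexp (-(T^2*y) + y^3/3 - x*y) := funext (fun T => gg_norm x T y)
    rw [hnorm]
    have h5 : Tendsto (fun T:ℝ => -(T^2*y) + y^3/3 - x*y) atTop atBot := by
      apply tendsto_atBot_add_const_right
      apply tendsto_atBot_add_const_right
      have h6 : Tendsto (fun T:ℝ => T^2) atTop atTop := tendsto_pow_atTop (by norm_num)
      have h7 := Tendsto.atTop_mul_const hy.1 h6
      exact tendsto_neg_atTop_atBot.comp h7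
    exact Real.tendsto_exp_atBot.comp h5

lemma gg_tendsto (x δ : ℝ) (hδ : 0 < δ) :
    Tendsto (fun T : ℝ => ∫ t in (0:ℝ)..T, gg x t) atTop
      (𝓝 ((∫ t in Set.Ioi (0:ℝ), gg x ((t:ℂ) + δ*Complex.I))
        + Complex.I * ∫ y in (0:ℝ)..δ, gg x ((y:ℝ)*Complex.I))) := by
  have h1 : Tendsto (fun T : ℝ => ∫ t in (0:ℝ)..T, gg x ((t:ℂ) + δ*Complex.I)) atTop
      (𝓝 (∫ t in Set.Ioi (0:ℝ), gg x ((t:ℂ) + δ*Complex.I))) :=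
    intervalIntegral_tendsto_integral_Ioi 0 (gg_integrableOn x δ hδ) tendsto_id
  have h2 := vert_tendsto x δ hδ
  have h3 := (h1.sub (h2.const_mul Complex.I)).add_const
    (Complex.I * ∫ y in (0:ℝ)..δ, gg x ((y:ℝ)*Complex.I))
  simp only [mul_zero, sub_zero] at h3
  convert h3 using 2 with T
  · exact rect x δ T

lemma cos_tendsto (x δ : ℝ) (hδ : 0 < δ) :
    Tendsto (fun T : ℝ => ∫ t in (0:ℝ)..T, Real.cos (t ^ 3 / 3 + x * t)) atTop
      (𝓝 (Real.exp (δ^3/3 - x*δ) *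
        ∫ t in Set.Ioi (0:ℝ), Real.exp (-(δ*t^2)) * Real.cos (t^3/3 + (x - δ^2)*t))) := by
  have hre : ∀ T : ℝ, ∫ t in (0:ℝ)..T, Real.cos (t ^ 3 / 3 + x * t)
      = (∫ t in (0:ℝ)..T, gg x t).re := by
    intro T
    have hii : IntervalIntegrable (fun t : ℝ => gg x t) volume 0 T :=
      ((gg_cont x).comp Complex.continuous_ofReal).intervalIntegrable 0 T
    have := Complex.reCLM.intervalIntegral_comp_comm hii
    simp only [Complex.reCLM_apply] at this
    rw [← this]
    apply intervalIntegral.integral_congr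
    intro t _
    have h := gg_re x t 0
    norm_num at h
    simpa using h.symm
  simp_rw [hre]
  have h := (Complex.continuous_re.tendsto _).comp (gg_tendsto x δ hδ)
  have key : ((∫ t in Set.Ioi (0:ℝ), gg x ((t:ℂ) + δ*Complex.I))
      + Complex.I * ∫ y in (0:ℝ)..δ, gg x ((y:ℝ)*Complex.I)).re
      = Real.exp (δ^3/3 - x*δ) *
        ∫ t in Set.Ioi (0:ℝ), Real.exp (-(δ*t^2)) * Real.cos (t^3/3 + (x - δ^2)*t) := by
    have hvert : (∫ y in (0:ℝ)..δ, gg x ((y:ℝ)*Complex.I))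
        = ((∫ y in (0:ℝ)..δ, Real.exp (y^3/3 - x*y) : ℝ) : ℂ) := by
      rw [← intervalIntegral.integral_ofReal]
      apply intervalIntegral.integral_congr
      intro y _
      have h2 := gg_eq x 0 y
      norm_num at h2
      simpa using h2
    rw [Complex.add_re, hvert]
    simp only [Complex.mul_re, Complex.I_re, Complex.I_im, Complex.ofReal_re, Complex.ofReal_im]
    ring_nf
    have hint := Complex.reCLM.integral_comp_comm (gg_integrableOn x δ hδ)
    simp only [Complex.reCLM_apply] at hint
    rw [← hint, ← integral_const_mul]
    try simp only [zero_mul, sub_zero, add_zero]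
    apply setIntegral_congr_fun measurableSet_Ioi
    intro t _
    have h3 := gg_re x t δ
    simp only []
    rw [h3, show -(t^2*δ) + δ^3/3 - x*δ = (δ^3/3 - x*δ) + -(δ*t^2) by ring,
        show t^3/3 - t*δ^2 + x*t = t^3/3 + (x - δ^2)*t by ring, Real.exp_add]
    ring
  rw [← key]
  exact h

/-- The contour-shift representation of the Airy function: for any `δ > 0`. -/
lemma Ai_rep (x δ : ℝ) (hδ : 0 < δ) :
    Ai x = (1/π) * (Real.exp (δ^3/3 - x*δ) *
      ∫ t in Set.Ioi (0:ℝ), Real.exp (-(δ*t^2)) * Real.cos (t^3/3 + (x - δ^2)*t)) := by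
  rw [Ai, (cos_tendsto x δ hδ).limUnder_eq]

lemma gauss_cos (σ b g : ℝ) (hσ : 0 < σ) :
    ∫ u : ℝ, Real.exp (-u^2 / (2*σ)) * Real.cos (b*u + g)
      = Real.sqrt (2*π*σ) * (Real.exp (-(b^2*σ/2)) * Real.cos g) := by
  set B : ℂ := ((-(1/(2*σ)) : ℝ) : ℂ) with hBdef
  have hB : B.re < 0 := by
    simp [hBdef]
    positivity
  have hexpo : ∀ u : ℝ, B*(u:ℂ)^2 + ((b:ℂ)*Complex.I)*u + ((g:ℂ)*Complex.I)
      = ((-u^2 / (2*σ) : ℝ) : ℂ) + ((b*u + g : ℝ) : ℂ)*Complex.I := by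
    intro u
    push_cast [hBdef]
    ring
  have hre : ∀ u : ℝ, (Complex.exp (B*(u:ℂ)^2 + ((b:ℂ)*Complex.I)*u + ((g:ℂ)*Complex.I))).re
      = Real.exp (-u^2 / (2*σ)) * Real.cos (b*u + g) := by
    intro u
    rw [hexpo u, Complex.exp_add, ← Complex.ofReal_exp, Complex.re_ofReal_mul,
      Complex.exp_ofReal_mul_I_re]
  have hInt : Integrable (fun u : ℝ =>
      Complex.exp (B*(u:ℂ)^2 + ((b:ℂ)*Complex.I)*u + ((g:ℂ)*Complex.I))) :=
    integrable_cexp_quadratic' hB _ _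
  have h1 := Complex.reCLM.integral_comp_comm hInt
  simp only [Complex.reCLM_apply] at h1
  have h2 : ∫ u : ℝ, Real.exp (-u^2 / (2*σ)) * Real.cos (b*u + g)
      = (∫ u : ℝ, Complex.exp (B*(u:ℂ)^2 + ((b:ℂ)*Complex.I)*u + ((g:ℂ)*Complex.I))).re := by
    rw [← h1]
    exact integral_congr_ae (Eventually.of_forall (fun u => (hre u).symm))
  rw [h2, integral_cexp_quadratic hB]
  have h3 : (↑π / -B) = ((2*π*σ : ℝ) : ℂ) := by
    rw [hBdef]
    push_cast
    field_simp
  have h4 : ((g:ℂ)*Complex.I - ((b:ℂ)*Complex.I)^2/(4*B))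
      = ((-(b^2*σ/2) : ℝ):ℂ) + ((g:ℝ):ℂ)*Complex.I := by
    rw [hBdef]
    have hσ' : (σ:ℂ) ≠ 0 := Complex.ofReal_ne_zero.mpr hσ.ne'
    push_cast
    field_simp
    ring_nf
    simp [Complex.I_sq]
    ring
  rw [h3, h4]
  have h5 : ((2*π*σ : ℝ) : ℂ) ^ (1/2 : ℂ) = ((Real.sqrt (2*π*σ) : ℝ) : ℂ) := by
    rw [show (1/2 : ℂ) = ((1/2 : ℝ) : ℂ) by norm_num, ← Complex.ofReal_cpow (by positivity),
      Real.sqrt_eq_rpow]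
  rw [h5, Complex.exp_add, ← Complex.ofReal_exp]
  rw [show ((Real.sqrt (2*π*σ) : ℝ) : ℂ)
        * ((Real.exp (-(b^2*σ/2)) : ℝ) * Complex.exp ((g:ℂ)*Complex.I))
      = ((Real.sqrt (2*π*σ) * Real.exp (-(b^2*σ/2)) : ℝ) : ℂ)
        * Complex.exp (((g:ℝ):ℂ)*Complex.I) by push_cast; ring]
  rw [Complex.re_ofReal_mul, Complex.exp_ofReal_mul_I_re]
  ring

lemma gauss_cos_shift (σ c' b g : ℝ) (hσ : 0 < σ) :
    ∫ u : ℝ, Real.exp (-(u - c')^2 / (2*σ)) * Real.cos (b*u + g)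
      = Real.sqrt (2*π*σ) * (Real.exp (-(b^2*σ/2)) * Real.cos (b*c' + g)) := by
  have h := MeasureTheory.integral_add_right_eq_self (μ := volume)
    (fun u : ℝ => Real.exp (-(u - c')^2 / (2*σ)) * Real.cos (b*u + g)) c'
  rw [← h]
  have : ∀ u : ℝ, Real.exp (-(u + c' - c')^2 / (2*σ)) * Real.cos (b*(u + c') + g)
      = Real.exp (-u^2 / (2*σ)) * Real.cos (b*u + (b*c' + g)) := by
    intro u
    rw [show u + c' - c' = u by ring, show b*(u + c') + g = b*u + (b*c' + g) by ring]
  simp_rw [this]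
  rw [gauss_cos σ b (b*c' + g) hσ]

/-- The Gaussian–Airy integral identity: for every `L > 0` and all `m, μ ∈ ℝ`,
`(1/√(2πL)) ∫_ℝ exp(−(u−m−L²)²/(2L) − 2uL + μL + 2L³/3) Ai(2^{−1/3}(2u−μ)) du
 = Ai(2^{−1/3}(2m−μ))`; in particular the left-hand side does not depend on `L`. -/
theorem gaussian_airy (L m μ : ℝ) (hL : 0 < L) :
    Integrable (fun u : ℝ =>
      Real.exp (-(u - m - L ^ 2) ^ 2 / (2 * L) - 2 * u * L + μ * L + 2 * L ^ 3 / 3)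
        * Ai ((2 : ℝ) ^ (-(1/3) : ℝ) * (2 * u - μ))) ∧
    (1 / Real.sqrt (2 * π * L)) *
      ∫ u : ℝ, Real.exp (-(u - m - L ^ 2) ^ 2 / (2 * L) - 2 * u * L + μ * L + 2 * L ^ 3 / 3)
        * Ai ((2 : ℝ) ^ (-(1/3) : ℝ) * (2 * u - μ))
      = Ai ((2 : ℝ) ^ (-(1/3) : ℝ) * (2 * m - μ)) := by
  have ha : (0:ℝ) < (2 : ℝ) ^ (-(1/3) : ℝ) := Real.rpow_pos_of_pos two_pos _
  set a : ℝ := (2 : ℝ) ^ (-(1/3) : ℝ) with hadef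
  have ha3 : a^3 = 1/2 := by
    rw [hadef, ← Real.rpow_natCast ((2:ℝ) ^ (-(1/3) : ℝ)) 3, ← Real.rpow_mul (by norm_num)]
    norm_num
  set δ : ℝ := 2*a^2*L with hδdef
  have hδ : 0 < δ := by positivity
  have hδ3 : δ^3 = 2*L^3 := by
    rw [hδdef]
    have ha6 : a^6 = 1/4 := by
      calc a^6 = (a^3)^2 := by ring
      _ = 1/4 := by rw [ha3]; norm_num
    calc (2*a^2*L)^3 = 8*a^6*L^3 := by ring
    _ = 2*L^3 := by rw [ha6]; ring
  have haδ : a*δ = L := by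
    rw [hδdef]
    linear_combination 2*L*ha3
  set c' : ℝ := m - 3*L^2 with hc'def
  set K : ℝ := 2*μ*L - 4*m*L + 16*L^3/3 with hKdef
  -- `J u` : the inner Airy-type integral after the contour-shift representation
  set J : ℝ → ℝ := fun u => ∫ t in Set.Ioi (0:ℝ),
    Real.exp (-(δ*t^2)) * Real.cos (t^3/3 + (a*(2*u-μ) - δ^2)*t) with hJdef
  -- pointwise rewriting of the integrand
  have hpoint : ∀ u : ℝ,
      Real.exp (-(u - m - L ^ 2) ^ 2 / (2 * L) - 2 * u * L + μ * L + 2 * L ^ 3 / 3)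
          * Ai (a * (2 * u - μ))
        = (Real.exp K / π) * (Real.exp (-(u - c')^2 / (2*L)) * J u) := by
    intro u
    rw [Ai_rep (a * (2 * u - μ)) δ hδ, hJdef]
    rw [show (-(u - m - L ^ 2) ^ 2 / (2 * L) - 2 * u * L + μ * L + 2 * L ^ 3 / 3)
        = (K - (u - c')^2 / (2*L)) - (δ^3/3 - (a*(2*u-μ))*δ) by
      rw [hKdef, hc'def, hδ3, show a*(2*u-μ)*δ = (2*u-μ)*(a*δ) by ring, haδ]
      field_simp
      ring]
    rw [show K - (u - c')^2 / (2*L) - (δ^3/3 - (a*(2*u-μ))*δ)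
        = (K + (-(u - c')^2 / (2*L))) + -(δ^3/3 - a*(2*u-μ)*δ) by ring]
    rw [Real.exp_add, Real.exp_add, Real.exp_neg]
    field_simp
  have hgaussint : Integrable (fun u : ℝ => Real.exp (-(u - c')^2 / (2*L))) := by
    have h1 : Integrable (fun u : ℝ => Real.exp (-(1/(2*L)) * u^2)) :=
      integrable_exp_neg_mul_sq (by positivity)
    have h2 := h1.comp_sub_right c'
    apply h2.congr
    filter_upwards with u
    rw [show -(1/(2*L)) * (u - c')^2 = -(u - c')^2 / (2*L) by field_simp]
  have hgaussT : IntegrableOn (fun t : ℝ => Real.exp (-(δ*t^2))) (Set.Ioi 0) := by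
    have h1 : Integrable (fun t : ℝ => Real.exp (-δ*t^2)) := integrable_exp_neg_mul_sq hδ
    exact (h1.congr (by filter_upwards with t; rw [neg_mul])).restrict
  -- J is continuous and bounded
  have hJcont : Continuous J := by
    rw [hJdef]
    apply MeasureTheory.continuous_of_dominated (bound := fun t => Real.exp (-(δ*t^2)))
    · intro u
      exact (Continuous.aestronglyMeasurable (by fun_prop)).restrict
    · intro u
      filter_upwards with t
      rw [norm_mul, Real.norm_eq_abs, Real.norm_eq_abs, abs_of_pos (Real.exp_pos _)]
      calc Real.exp (-(δ*t^2)) * |Real.cos (t^3/3 + (a*(2*u-μ) - δ^2)*t)|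
          ≤ Real.exp (-(δ*t^2)) * 1 := by
            apply mul_le_mul_of_nonneg_left (Real.abs_cos_le_one _) (Real.exp_pos _).le
      _ = Real.exp (-(δ*t^2)) := mul_one _
    · exact hgaussT
    · filter_upwards with t
      fun_prop
  have hJbdd : ∀ u : ℝ, ‖J u‖ ≤ ∫ t in Set.Ioi (0:ℝ), Real.exp (-(δ*t^2)) := by
    intro u
    apply norm_integral_le_of_norm_le hgaussT
    filter_upwards with t
    rw [norm_mul, Real.norm_eq_abs, Real.norm_eq_abs, abs_of_pos (Real.exp_pos _)]
    calc Real.exp (-(δ*t^2)) * |Real.cos (t^3/3 + (a*(2*u-μ) - δ^2)*t)|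
        ≤ Real.exp (-(δ*t^2)) * 1 :=
          mul_le_mul_of_nonneg_left (Real.abs_cos_le_one _) (Real.exp_pos _).le
    _ = Real.exp (-(δ*t^2)) := mul_one _
  -- integrability (first half of the statement)
  have hInt : Integrable (fun u : ℝ =>
      Real.exp (-(u - m - L ^ 2) ^ 2 / (2 * L) - 2 * u * L + μ * L + 2 * L ^ 3 / 3)
        * Ai (a * (2 * u - μ))) := by
    have h1 : Integrable (fun u : ℝ => J u * Real.exp (-(u - c')^2 / (2*L))) :=
      hgaussint.bdd_mul hJcont.aestronglyMeasurable
        (Eventually.of_forall fun u => hJbdd u)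
    have h2 : Integrable (fun u : ℝ =>
        (Real.exp K / π) * (J u * Real.exp (-(u - c')^2 / (2*L)))) :=
      h1.const_mul (Real.exp K / π)
    apply h2.congr
    filter_upwards with u
    rw [hpoint u]
    ring
  refine ⟨hInt, ?_⟩
  -- Fubini
  have hprod : Integrable (Function.uncurry (fun u t =>
      Real.exp (-(u - c')^2 / (2*L)) * (Real.exp (-(δ*t^2))
        * Real.cos (t^3/3 + (a*(2*u-μ) - δ^2)*t))))
      (volume.prod (volume.restrict (Set.Ioi 0))) := by
    apply Integrable.mono' (g := fun p : ℝ × ℝ =>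
      Real.exp (-(p.1 - c')^2 / (2*L)) * Real.exp (-(δ*p.2^2)))
    · exact hgaussint.mul_prod hgaussT
    · apply Continuous.aestronglyMeasurable
      fun_prop
    · filter_upwards with p
      rw [Function.uncurry]
      rw [norm_mul, Real.norm_eq_abs, Real.norm_eq_abs, abs_of_pos (Real.exp_pos _)]
      rw [abs_mul, abs_of_pos (Real.exp_pos _)]
      apply mul_le_mul_of_nonneg_left _ (Real.exp_pos _).le
      calc Real.exp (-(δ*p.2^2)) * |Real.cos (p.2^3/3 + (a*(2*p.1-μ) - δ^2)*p.2)|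
          ≤ Real.exp (-(δ*p.2^2)) * 1 :=
            mul_le_mul_of_nonneg_left (Real.abs_cos_le_one _) (Real.exp_pos _).le
      _ = Real.exp (-(δ*p.2^2)) := mul_one _
  have hswap := MeasureTheory.integral_integral_swap (μ := volume)
    (ν := volume.restrict (Set.Ioi 0)) hprod
  -- the inner u-integral for fixed t
  have hinner : ∀ t : ℝ, (∫ u : ℝ, Real.exp (-(u - c')^2 / (2*L))
        * (Real.exp (-(δ*t^2)) * Real.cos (t^3/3 + (a*(2*u-μ) - δ^2)*t)))
      = Real.sqrt (2*π*L) * (Real.exp (-((2*δ)*t^2))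
        * Real.cos (t^3/3 + (a*(2*m-μ) - (2*δ)^2)*t)) := by
    intro t
    have harg : ∀ u : ℝ, t^3/3 + (a*(2*u-μ) - δ^2)*t
        = (2*a*t)*u + (t^3/3 - (a*μ + δ^2)*t) := fun u => by ring
    have hstep : ∀ u : ℝ, Real.exp (-(u - c')^2 / (2*L))
          * (Real.exp (-(δ*t^2)) * Real.cos (t^3/3 + (a*(2*u-μ) - δ^2)*t))
        = Real.exp (-(δ*t^2)) * (Real.exp (-(u - c')^2 / (2*L))
          * Real.cos ((2*a*t)*u + (t^3/3 - (a*μ + δ^2)*t))) := by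
      intro u
      rw [harg u]
      ring
    simp_rw [hstep]
    rw [integral_const_mul, gauss_cos_shift L c' (2*a*t) (t^3/3 - (a*μ + δ^2)*t) hL]
    rw [show (2*a*t)^2*L/2 = δ*t^2 by rw [hδdef]; ring]
    rw [show (2*a*t)*c' + (t^3/3 - (a*μ + δ^2)*t)
        = t^3/3 + (a*(2*m-μ) - (2*δ)^2)*t by
      rw [hc'def, hδdef]; linear_combination (12*a*L^2*t)*ha3]
    rw [show -((2*δ)*t^2) = -(δ*t^2) + -(δ*t^2) by ring, Real.exp_add]
    ring
  -- assemble everything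
  have hstep1 : (∫ u : ℝ, Real.exp (-(u - m - L ^ 2) ^ 2 / (2 * L)
        - 2 * u * L + μ * L + 2 * L ^ 3 / 3) * Ai (a * (2 * u - μ)))
      = (Real.exp K / π) * ∫ u : ℝ, Real.exp (-(u - c')^2 / (2*L)) * J u := by
    rw [← integral_const_mul]
    exact integral_congr_ae (Eventually.of_forall fun u => hpoint u)
  have hstep2 : (∫ u : ℝ, Real.exp (-(u - c')^2 / (2*L)) * J u)
      = ∫ t in Set.Ioi (0:ℝ), ∫ u : ℝ, Real.exp (-(u - c')^2 / (2*L))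
          * (Real.exp (-(δ*t^2)) * Real.cos (t^3/3 + (a*(2*u-μ) - δ^2)*t)) := by
    rw [← hswap]
    apply integral_congr_ae
    filter_upwards with u
    rw [hJdef]
    exact (integral_const_mul _ _).symm
  have hstep3 : (∫ t in Set.Ioi (0:ℝ), ∫ u : ℝ, Real.exp (-(u - c')^2 / (2*L))
          * (Real.exp (-(δ*t^2)) * Real.cos (t^3/3 + (a*(2*u-μ) - δ^2)*t)))
      = Real.sqrt (2*π*L) * ∫ t in Set.Ioi (0:ℝ), Real.exp (-((2*δ)*t^2))
          * Real.cos (t^3/3 + (a*(2*m-μ) - (2*δ)^2)*t) := by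
    rw [← integral_const_mul]
    exact integral_congr_ae (Eventually.of_forall fun t => hinner t)
  have hA := Ai_rep (a*(2*m-μ)) (2*δ) (by positivity)
  have hKE : Real.exp K = Real.exp ((2*δ)^3/3 - (a*(2*m-μ))*(2*δ)) := by
    congr 1
    rw [hKdef]
    linear_combination (-8/3)*hδ3 + (2*(2*m-μ))*haδ
  rw [hstep1, hstep2, hstep3, hKE, hA]
  have hsq : Real.sqrt (2*π*L) ≠ 0 := by positivity
  have hπ : (π:ℝ) ≠ 0 := Real.pi_ne_zero
  field_simp
end

section
/- Let f(w, w̃) = −(w + w̃)²/8 + (w + w̃) − 4/3 and let D₁ = { (w, w̃) ∈ ℝ² : w ≤ 1 and w̃ ≤ 1 } \ [0,1]². Then there exist C > 0 and L₀ > 0 such that for all L ≥ L₀, ∫_{D₁} e^{2L³ f(w, w̃)} dw dw̃ ≤ C L^{−9/2} e^{−(11/12) L³}. -/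
open MeasureTheory Set Real

lemma integrableOn_exp_mul_Iic' {c : ℝ} (hc : 1 ≤ c) (b : ℝ) :
    IntegrableOn (fun x => Real.exp (c * x)) (Set.Iic b) := by
  refine Integrable.mono' ((integrableOn_exp_Iic b).const_mul (Real.exp (c * b - b))) ?_ ?_
  · exact (Real.continuous_exp.comp (continuous_const.mul continuous_id)).aestronglyMeasurable
  · filter_upwards [ae_restrict_mem measurableSet_Iic] with x hx
    rw [Real.norm_of_nonneg (Real.exp_pos _).le, ← Real.exp_add]
    apply Real.exp_le_exp.2
    nlinarith [mem_Iic.1 hx]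

lemma integral_exp_mul_Iic' {c : ℝ} (hc : 0 < c) (b : ℝ) :
    ∫ x in Set.Iic b, Real.exp (c * x) = Real.exp (c * b) / c := by
  have h2 : ∫ x in Set.Ioi (-b), Real.exp (c * -x) = ∫ x in Set.Iic b, Real.exp (c * x) := by
    simpa using integral_comp_neg_Ioi (-b) (fun y => Real.exp (c * y))
  have h1 := integral_comp_mul_left_Ioi (fun x => Real.exp (-x)) (-b) hc
  simp only [neg_mul, ← mul_neg] at h1
  rw [h2] at h1
  rw [h1, integral_exp_neg_Ioi]
  rw [smul_eq_mul, mul_neg, neg_neg, div_eq_inv_mul]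

/-- The region `D₁ = {w ≤ 1, w̃ ≤ 1} \ [0,1]²`. -/
def D₁ : Set (ℝ × ℝ) :=
  {p : ℝ × ℝ | p.1 ≤ 1 ∧ p.2 ≤ 1} \ (Set.Icc (0:ℝ) 1 ×ˢ Set.Icc (0:ℝ) 1)

/-- Laplace-method bound: with `f(w,w̃) = −(w+w̃)²/8 + (w+w̃) − 4/3`, there are `C > 0` and
`L₀ > 0` such that for all `L ≥ L₀`,
`∫_{D₁} e^{2L³ f(w,w̃)} dw dw̃ ≤ C L^{−9/2} e^{−(11/12)L³}`. -/
theorem laplace_bound_D1 :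
    ∃ C L₀ : ℝ, 0 < C ∧ 0 < L₀ ∧ ∀ L : ℝ, L₀ ≤ L →
      (∫ p in D₁, Real.exp (2 * L ^ 3 *
          (-(p.1 + p.2) ^ 2 / 8 + (p.1 + p.2) - 4/3)))
        ≤ C * L ^ (-(9/2) : ℝ) * Real.exp (-(11/12) * L ^ 3) := by
  refine ⟨1, 1, one_pos, one_pos, fun L hL1 => ?_⟩
  have hL0 : (0:ℝ) < L := lt_of_lt_of_le one_pos hL1
  have hL3 : (1:ℝ) ≤ L ^ 3 := one_le_pow₀ hL1
  set c : ℝ := 3/2 * L ^ 3 with hcdef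
  have hc1 : 1 ≤ c := by simp only [hcdef]; nlinarith
  have hc0 : 0 < c := lt_of_lt_of_le one_pos hc1
  set K : ℝ := Real.exp (-(11/12) * L ^ 3) * Real.exp (-c) with hKdef
  set H : ℝ × ℝ → ℝ := fun p => K * (Real.exp (c * p.1) * Real.exp (c * p.2)) with hHdef
  set A : Set (ℝ × ℝ) := Set.Iic (0:ℝ) ×ˢ Set.Iic (1:ℝ) with hAdef
  set B : Set (ℝ × ℝ) := Set.Iic (1:ℝ) ×ˢ Set.Iic (0:ℝ) with hBdef
  -- D₁ is contained in A ∪ B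
  have hAB : D₁ ⊆ A ∪ B := by
    rintro ⟨x, y⟩ ⟨⟨hx, hy⟩, hn⟩
    simp only [Set.mem_prod, Set.mem_Icc, not_and, not_le] at hn
    simp only [hAdef, hBdef, Set.mem_union, Set.mem_prod, Set.mem_Iic]
    rcases le_or_gt 0 x with h | h
    · rcases le_or_gt 0 y with h' | h'
      · exact absurd (hn ⟨h, hx⟩) (by push_neg; exact ⟨h', hy⟩)
      · exact Or.inr ⟨hx, h'.le⟩
    · exact Or.inl ⟨h.le, hy⟩
  -- pointwise bound
  have hpt : ∀ p : ℝ × ℝ, Real.exp (2 * L ^ 3 *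
      (-(p.1 + p.2) ^ 2 / 8 + (p.1 + p.2) - 4/3)) ≤ H p := by
    intro p
    have hH : H p = Real.exp (-(11/12) * L ^ 3 + -c + (c * p.1 + c * p.2)) := by
      simp only [hHdef, hKdef, ← Real.exp_add]
    rw [hH]
    apply Real.exp_le_exp.2
    have h0 : (0:ℝ) ≤ L ^ 3 * (p.1 + p.2 - 1) ^ 2 :=
      mul_nonneg (by positivity) (sq_nonneg _)
    simp only [hcdef]
    nlinarith [h0]
  -- integrability of the 1D exponential factors
  have hI0 : IntegrableOn (fun x : ℝ => Real.exp (c * x)) (Set.Iic (0:ℝ)) :=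
    integrableOn_exp_mul_Iic' hc1 0
  have hI1 : IntegrableOn (fun x : ℝ => Real.exp (c * x)) (Set.Iic (1:ℝ)) :=
    integrableOn_exp_mul_Iic' hc1 1
  have hmeasprod : ∀ s t : Set ℝ, (volume : Measure (ℝ × ℝ)).restrict (s ×ˢ t)
      = (volume.restrict s).prod (volume.restrict t) := by
    intro s t
    rw [Measure.volume_eq_prod, Measure.prod_restrict]
  have hHA : IntegrableOn H A := by
    rw [IntegrableOn, hAdef, hmeasprod]
    exact (hI0.mul_prod hI1).const_mul K
  have hHB : IntegrableOn H B := by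
    rw [IntegrableOn, hBdef, hmeasprod]
    exact (hI1.mul_prod hI0).const_mul K
  have hHU : IntegrableOn H (A ∪ B) := hHA.union hHB
  have hHD : IntegrableOn H D₁ := hHU.mono_set hAB
  have hFD : IntegrableOn (fun p : ℝ × ℝ => Real.exp (2 * L ^ 3 *
      (-(p.1 + p.2) ^ 2 / 8 + (p.1 + p.2) - 4/3))) D₁ := by
    refine Integrable.mono' hHD ?_ ?_
    · apply Continuous.aestronglyMeasurable
      continuity
    · filter_upwards with p
      rw [Real.norm_of_nonneg (Real.exp_pos _).le]
      exact hpt p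
  -- compute the integrals over A and B
  have hintA : ∫ p in A, H p = K * Real.exp c / c ^ 2 := by
    rw [hAdef, hmeasprod, hHdef]
    simp only [integral_const_mul]
    rw [integral_prod_mul (fun x => Real.exp (c * x)) (fun y => Real.exp (c * y))]
    rw [integral_exp_mul_Iic' hc0, integral_exp_mul_Iic' hc0]
    rw [mul_zero, mul_one, Real.exp_zero]
    field_simp
  have hintB : ∫ p in B, H p = K * Real.exp c / c ^ 2 := by
    rw [hBdef, hmeasprod, hHdef]
    simp only [integral_const_mul]
    rw [integral_prod_mul (fun x => Real.exp (c * x)) (fun y => Real.exp (c * y))]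
    rw [integral_exp_mul_Iic' hc0, integral_exp_mul_Iic' hc0]
    rw [mul_zero, mul_one, Real.exp_zero]
    field_simp
  have hHnonneg : ∀ p : ℝ × ℝ, 0 ≤ H p := fun p => by
    simp only [hHdef]; positivity
  have step1 : (∫ p in D₁, Real.exp (2 * L ^ 3 *
      (-(p.1 + p.2) ^ 2 / 8 + (p.1 + p.2) - 4/3))) ≤ ∫ p in D₁, H p :=
    integral_mono hFD hHD (fun p => hpt p)
  have step2 : (∫ p in D₁, H p) ≤ ∫ p in A ∪ B, H p :=
    setIntegral_mono_set hHU (Filter.Eventually.of_forall hHnonneg)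
      (HasSubset.Subset.eventuallyLE hAB)
  have hBmeas : MeasurableSet (B \ A) :=
    ((measurableSet_Iic.prod measurableSet_Iic).diff
      (measurableSet_Iic.prod measurableSet_Iic))
  have step3 : (∫ p in A ∪ B, H p) ≤ (∫ p in A, H p) + ∫ p in B, H p := by
    rw [← Set.union_diff_self, setIntegral_union disjoint_sdiff_self_right hBmeas hHA
      (hHB.mono_set Set.diff_subset)]
    refine add_le_add_right ?_ _
    exact setIntegral_mono_set hHB (Filter.Eventually.of_forall hHnonneg)
      (HasSubset.Subset.eventuallyLE Set.diff_subset)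
  -- final arithmetic
  have hKc : K * Real.exp c = Real.exp (-(11/12) * L ^ 3) := by
    rw [hKdef, mul_assoc, ← Real.exp_add, neg_add_cancel, Real.exp_zero, mul_one]
  have hfinal : 2 * (K * Real.exp c / c ^ 2)
      ≤ 1 * L ^ (-(9/2) : ℝ) * Real.exp (-(11/12) * L ^ 3) := by
    rw [hKc, one_mul]
    have h1 : (2:ℝ) / c ^ 2 ≤ (L ^ 6)⁻¹ := by
      rw [div_le_iff₀ (by positivity), hcdef]
      rw [inv_mul_eq_div, le_div_iff₀ (by positivity)]
      nlinarith [pow_pos hL0 6, pow_pos hL0 3]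
    have h2 : ((L:ℝ) ^ 6)⁻¹ = L ^ (-(6:ℝ) : ℝ) := by
      rw [Real.rpow_neg hL0.le]
      norm_cast
    have h3 : L ^ (-(6:ℝ) : ℝ) ≤ L ^ (-(9/2) : ℝ) :=
      Real.rpow_le_rpow_of_exponent_le hL1 (by norm_num)
    have h4 : (2:ℝ) / c ^ 2 ≤ L ^ (-(9/2):ℝ) := h1.trans (h2.le.trans h3)
    calc 2 * (Real.exp (-(11/12) * L ^ 3) / c ^ 2)
        = (2 / c ^ 2) * Real.exp (-(11/12) * L ^ 3) := by ring
      _ ≤ L ^ (-(9/2):ℝ) * Real.exp (-(11/12) * L ^ 3) :=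
          mul_le_mul_of_nonneg_right h4 (Real.exp_pos _).le
  calc (∫ p in D₁, Real.exp (2 * L ^ 3 *
          (-(p.1 + p.2) ^ 2 / 8 + (p.1 + p.2) - 4/3)))
      ≤ ∫ p in D₁, H p := step1
    _ ≤ ∫ p in A ∪ B, H p := step2
    _ ≤ (∫ p in A, H p) + ∫ p in B, H p := step3
    _ = 2 * (K * Real.exp c / c ^ 2) := by rw [hintA, hintB]; ring
    _ ≤ 1 * L ^ (-(9/2) : ℝ) * Real.exp (-(11/12) * L ^ 3) := hfinal
end

section
/- For every m ∈ ℝ there exists a constant C > 0 (depending on m) such that for all L ≥ 1, ∫_{−∞}^0 ∫_{−∞}^1 e^{2(λ − m)L} · Ai( L²(1 − w) + m − λ )² dw dλ ≤ C e^{−2mL}. -/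
open MeasureTheory Real Filter

open Set Topology

noncomputable def ph (x t : ℝ) : ℝ := t ^ 3 / 3 + x * t

lemma ph_cont (x : ℝ) : Continuous (fun t => ph x t) := by
  unfold ph; fun_prop

lemma ph_hasDeriv (x t : ℝ) : HasDerivAt (fun t => ph x t) (t ^ 2 + x) t := by
  have h1 : HasDerivAt (fun t : ℝ => t ^ 3 / 3) (t ^ 2) t := by
    simpa using ((hasDerivAt_pow 3 t).div_const 3)
  have h2 : HasDerivAt (fun t : ℝ => x * t) x t := by
    simpa using (hasDerivAt_id t).const_mul x
  simpa [ph] using h1.fun_add h2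

lemma antider_hasDeriv (x t : ℝ) (h : t ^ 2 + x ≠ 0) :
    HasDerivAt (fun t => Real.sin (ph x t) / (t ^ 2 + x))
      (Real.cos (ph x t) - 2 * t * Real.sin (ph x t) / (t ^ 2 + x) ^ 2) t := by
  have h1 : HasDerivAt (fun t => Real.sin (ph x t)) (Real.cos (ph x t) * (t ^ 2 + x)) t :=
    (Real.hasDerivAt_sin (ph x t)).comp t (ph_hasDeriv x t)
  have h2 : HasDerivAt (fun t : ℝ => t ^ 2 + x) (2 * t) t := by
    simpa using (hasDerivAt_pow 2 t).add_const x
  have := h1.fun_div h2 h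
  refine this.congr_deriv ?_
  field_simp

noncomputable def AiAux (x t₀ : ℝ) : ℝ :=
  (∫ t in (0:ℝ)..t₀, Real.cos (ph x t)) - Real.sin (ph x t₀) / (t₀ ^ 2 + x)
    + ∫ t in Set.Ioi t₀, 2 * t * Real.sin (ph x t) / (t ^ 2 + x) ^ 2

lemma denom_pos {x t₀ : ℝ} (ht₀ : 0 ≤ t₀) (hx : 0 < t₀ ^ 2 + x) :
    ∀ t ∈ Ici t₀, 0 < t ^ 2 + x := by
  intro t ht
  have h1 : t₀ ≤ t := ht
  have : t₀ ^ 2 ≤ t ^ 2 := by nlinarith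
  linarith

lemma inv_hasDeriv {x t₀ : ℝ} (ht₀ : 0 ≤ t₀) (hx : 0 < t₀ ^ 2 + x) :
    ∀ t ∈ Ici t₀, HasDerivAt (fun t : ℝ => -(t ^ 2 + x)⁻¹)
    (2 * t / (t ^ 2 + x) ^ 2) t := by
  intro t ht
  have h2 : HasDerivAt (fun t : ℝ => t ^ 2 + x) (2 * t) t := by
    simpa using (hasDerivAt_pow 2 t).add_const x
  have := (h2.fun_inv (denom_pos ht₀ hx t ht).ne').fun_neg
  refine this.congr_deriv ?_
  field_simp

lemma inv_tendsto (x : ℝ) : Tendsto (fun t : ℝ => -(t ^ 2 + x)⁻¹) atTop (𝓝 0) := by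
  rw [show (0:ℝ) = -0 by norm_num]
  apply Tendsto.neg
  apply Tendsto.inv_tendsto_atTop
  apply tendsto_atTop_add_const_right
  exact tendsto_pow_atTop (by norm_num)

lemma G_integrable {x t₀ : ℝ} (ht₀ : 0 ≤ t₀) (hx : 0 < t₀ ^ 2 + x) :
    IntegrableOn (fun t : ℝ => 2 * t / (t ^ 2 + x) ^ 2) (Ioi t₀) := by
  apply integrableOn_Ioi_deriv_of_nonneg
    ((inv_hasDeriv ht₀ hx t₀ self_mem_Ici).continuousAt.continuousWithinAt)
    (fun t ht => inv_hasDeriv ht₀ hx t (Ioi_subset_Ici_self ht))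
    (fun t ht => by
      have h0 : (0:ℝ) ≤ t := le_trans ht₀ (le_of_lt ht)
      positivity)
    (inv_tendsto x)

lemma G_integral {x t₀ : ℝ} (ht₀ : 0 ≤ t₀) (hx : 0 < t₀ ^ 2 + x) :
    ∫ t in Set.Ioi t₀, 2 * t / (t ^ 2 + x) ^ 2 = (t₀ ^ 2 + x)⁻¹ := by
  rw [integral_Ioi_of_hasDerivAt_of_tendsto
    ((inv_hasDeriv ht₀ hx t₀ self_mem_Ici).continuousAt.continuousWithinAt)
    (fun t ht => inv_hasDeriv ht₀ hx t (Ioi_subset_Ici_self ht))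
    (G_integrable ht₀ hx) (inv_tendsto x)]
  ring

lemma gg_contOn {x t₀ : ℝ} (ht₀ : 0 ≤ t₀) (hx : 0 < t₀ ^ 2 + x) :
    ContinuousOn (fun t : ℝ => 2 * t * Real.sin (ph x t) / (t ^ 2 + x) ^ 2) (Ici t₀) := by
  apply ContinuousOn.div
  · exact (Continuous.mul (by fun_prop) (Real.continuous_sin.comp (ph_cont x))).continuousOn
  · fun_prop
  · intro t ht
    exact pow_ne_zero 2 (denom_pos ht₀ hx t ht).ne'

lemma gg_le {x t₀ : ℝ} (ht₀ : 0 ≤ t₀) (hx : 0 < t₀ ^ 2 + x) {t : ℝ} (ht : t ∈ Ici t₀) :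
    |2 * t * Real.sin (ph x t) / (t ^ 2 + x) ^ 2| ≤ 2 * t / (t ^ 2 + x) ^ 2 := by
  have h0 : (0:ℝ) ≤ t := le_trans ht₀ ht
  have hd : 0 < t ^ 2 + x := denom_pos ht₀ hx t ht
  rw [abs_div, abs_of_nonneg (by positivity : (0:ℝ) ≤ (t ^ 2 + x) ^ 2)]
  apply div_le_div_of_nonneg_right ?_ (by positivity) |>.trans_eq rfl
  rw [abs_mul]
  calc |2 * t| * |Real.sin (ph x t)| ≤ |2 * t| * 1 :=
      mul_le_mul_of_nonneg_left (abs_le.mpr ⟨neg_one_le_sin _, sin_le_one _⟩) (abs_nonneg _)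
    _ = 2 * t := by rw [mul_one, abs_of_nonneg (by positivity)]

lemma gg_integrable {x t₀ : ℝ} (ht₀ : 0 ≤ t₀) (hx : 0 < t₀ ^ 2 + x) :
    IntegrableOn (fun t : ℝ => 2 * t * Real.sin (ph x t) / (t ^ 2 + x) ^ 2) (Ioi t₀) := by
  apply Integrable.mono (G_integrable ht₀ hx)
    (((gg_contOn ht₀ hx).mono Ioi_subset_Ici_self).aestronglyMeasurable measurableSet_Ioi)
  filter_upwards [ae_restrict_mem measurableSet_Ioi] with t ht
  have h0 : (0:ℝ) ≤ t := le_trans ht₀ (le_of_lt ht)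
  rw [Real.norm_eq_abs, Real.norm_eq_abs]
  exact (gg_le ht₀ hx (Ioi_subset_Ici_self ht)).trans (le_abs_self _)

lemma airy_tendsto {x t₀ : ℝ} (ht₀ : 0 ≤ t₀) (hx : 0 < t₀ ^ 2 + x) :
    Tendsto (fun T : ℝ => ∫ t in (0:ℝ)..T, Real.cos (ph x t)) atTop (𝓝 (AiAux x t₀)) := by
  have hcos : ∀ a b : ℝ, IntervalIntegrable (fun t => Real.cos (ph x t)) volume a b :=
    fun a b => (Real.continuous_cos.comp (ph_cont x)).intervalIntegrable a b
  have key : ∀ T, t₀ ≤ T →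
      (∫ t in (0:ℝ)..T, Real.cos (ph x t)) =
        (∫ t in (0:ℝ)..t₀, Real.cos (ph x t)) - Real.sin (ph x t₀) / (t₀ ^ 2 + x)
          + (Real.sin (ph x T) / (T ^ 2 + x)
              + ∫ t in t₀..T, 2 * t * Real.sin (ph x t) / (t ^ 2 + x) ^ 2) := by
    intro T hT
    have hsplit : (∫ t in (0:ℝ)..t₀, Real.cos (ph x t)) + ∫ t in t₀..T, Real.cos (ph x t)
        = ∫ t in (0:ℝ)..T, Real.cos (ph x t) :=
      intervalIntegral.integral_add_adjacent_intervals (hcos 0 t₀) (hcos t₀ T)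
    have hgg : IntervalIntegrable (fun t => 2 * t * Real.sin (ph x t) / (t ^ 2 + x) ^ 2)
        volume t₀ T := by
      apply ContinuousOn.intervalIntegrable
      apply (gg_contOn ht₀ hx).mono
      rw [uIcc_of_le hT]
      exact Icc_subset_Ici_self
    have hftc : ∫ t in t₀..T,
        (Real.cos (ph x t) - 2 * t * Real.sin (ph x t) / (t ^ 2 + x) ^ 2)
        = Real.sin (ph x T) / (T ^ 2 + x) - Real.sin (ph x t₀) / (t₀ ^ 2 + x) := by
      apply intervalIntegral.integral_eq_sub_of_hasDerivAt
      · intro t ht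
        rw [uIcc_of_le hT] at ht
        exact antider_hasDeriv x t (denom_pos ht₀ hx t ht.1).ne'
      · exact (hcos t₀ T).sub hgg
    rw [intervalIntegral.integral_sub (hcos t₀ T) hgg] at hftc
    linarith [hsplit, hftc]
  have hg0 : Tendsto (fun T : ℝ => (T ^ 2 + x)⁻¹) atTop (𝓝 0) := by
    apply Tendsto.inv_tendsto_atTop
    apply tendsto_atTop_add_const_right
    exact tendsto_pow_atTop (by norm_num)
  have h1 : Tendsto (fun T : ℝ => Real.sin (ph x T) / (T ^ 2 + x)) atTop (𝓝 0) := by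
    apply squeeze_zero_norm' ?_ hg0
    filter_upwards [eventually_ge_atTop t₀] with T hT
    have hd := denom_pos ht₀ hx T hT
    rw [norm_div, Real.norm_eq_abs, Real.norm_eq_abs, abs_of_pos hd]
    calc |Real.sin (ph x T)| / (T ^ 2 + x) ≤ 1 / (T ^ 2 + x) := by
          gcongr
          exact abs_le.mpr ⟨neg_one_le_sin _, sin_le_one _⟩
      _ = (T ^ 2 + x)⁻¹ := one_div _
  have h2 : Tendsto (fun T : ℝ => ∫ t in t₀..T, 2 * t * Real.sin (ph x t) / (t ^ 2 + x) ^ 2)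
      atTop (𝓝 (∫ t in Set.Ioi t₀, 2 * t * Real.sin (ph x t) / (t ^ 2 + x) ^ 2)) :=
    intervalIntegral_tendsto_integral_Ioi t₀ (gg_integrable ht₀ hx) tendsto_id
  have h3 := (h1.add h2).const_add
    ((∫ t in (0:ℝ)..t₀, Real.cos (ph x t)) - Real.sin (ph x t₀) / (t₀ ^ 2 + x))
  rw [zero_add] at h3
  apply h3.congr'
  filter_upwards [eventually_ge_atTop t₀] with T hT
  exact (key T hT).symm

lemma aiAux_bound {x t₀ : ℝ} (ht₀ : 0 ≤ t₀) (hx : 0 < t₀ ^ 2 + x) :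
    |AiAux x t₀| ≤ t₀ + 2 / (t₀ ^ 2 + x) := by
  have b1 : |∫ t in (0:ℝ)..t₀, Real.cos (ph x t)| ≤ t₀ := by
    have := intervalIntegral.norm_integral_le_of_norm_le_const
      (C := 1) (f := fun t => Real.cos (ph x t)) (a := 0) (b := t₀) ?_
    · simpa [abs_of_nonneg ht₀] using this
    · intro t _
      rw [Real.norm_eq_abs]
      exact abs_le.mpr ⟨neg_one_le_cos _, cos_le_one _⟩
  have b2 : |Real.sin (ph x t₀) / (t₀ ^ 2 + x)| ≤ 1 / (t₀ ^ 2 + x) := by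
    rw [abs_div, abs_of_pos hx]
    gcongr
    exact abs_le.mpr ⟨neg_one_le_sin _, sin_le_one _⟩
  have b3 : |∫ t in Set.Ioi t₀, 2 * t * Real.sin (ph x t) / (t ^ 2 + x) ^ 2|
      ≤ 1 / (t₀ ^ 2 + x) := by
    have step : |∫ t in Set.Ioi t₀, 2 * t * Real.sin (ph x t) / (t ^ 2 + x) ^ 2|
        ≤ ∫ t in Set.Ioi t₀, 2 * t / (t ^ 2 + x) ^ 2 := by
      rw [← Real.norm_eq_abs]
      apply (norm_integral_le_integral_norm _).trans
      apply integral_mono_of_nonneg (Eventually.of_forall fun t => norm_nonneg _)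
        (G_integrable ht₀ hx)
      filter_upwards [ae_restrict_mem measurableSet_Ioi] with t ht
      rw [Real.norm_eq_abs]
      exact gg_le ht₀ hx (Ioi_subset_Ici_self ht)
    rw [G_integral ht₀ hx, ← one_div] at step
    exact step
  unfold AiAux
  have := abs_add_le (((∫ t in (0:ℝ)..t₀, Real.cos (ph x t)) - Real.sin (ph x t₀) / (t₀ ^ 2 + x)))
    (∫ t in Set.Ioi t₀, 2 * t * Real.sin (ph x t) / (t ^ 2 + x) ^ 2)
  have h4 := abs_sub (∫ t in (0:ℝ)..t₀, Real.cos (ph x t))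
    (Real.sin (ph x t₀) / (t₀ ^ 2 + x))
  have h5 : 2 / (t₀ ^ 2 + x) = 1 / (t₀ ^ 2 + x) + 1 / (t₀ ^ 2 + x) := by ring
  linarith

lemma Ai_eq {x t₀ : ℝ} (ht₀ : 0 ≤ t₀) (hx : 0 < t₀ ^ 2 + x) :
    Ai x = (1 / π) * AiAux x t₀ := by
  unfold Ai
  congr 1
  have h : (fun T : ℝ => ∫ t in (0:ℝ)..T, Real.cos (t ^ 3 / 3 + x * t))
      = fun T : ℝ => ∫ t in (0:ℝ)..T, Real.cos (ph x t) := rfl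
  rw [h]
  exact (airy_tendsto ht₀ hx).limUnder_eq

lemma Ai_bound_pos {x : ℝ} (hx : 0 < x) : |Ai x| ≤ 2 / x := by
  have h0 : (0:ℝ) < (0:ℝ) ^ 2 + x := by simpa using hx
  rw [Ai_eq le_rfl h0, abs_mul]
  have h1 : |1 / π| ≤ 1 := by
    rw [abs_of_pos (by positivity : (0:ℝ) < 1 / π)]
    rw [div_le_one Real.pi_pos]
    linarith [Real.pi_gt_three]
  have h2 := aiAux_bound le_rfl h0
  simp only [zero_pow, zero_add] at h2 ⊢
  calc |1 / π| * |AiAux x 0| ≤ 1 * (2 / (0 ^ 2 + x)) :=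
      mul_le_mul h1 (h2) (abs_nonneg _) zero_le_one
    _ = 2 / x := by norm_num

lemma Ai_bound_all (x : ℝ) : |Ai x| ≤ |x| + 3 := by
  have ht₀ : (0:ℝ) ≤ |x| + 2 := by positivity
  have hx : 0 < (|x| + 2) ^ 2 + x := by nlinarith [abs_nonneg x, neg_abs_le x]
  have h4 : (4:ℝ) ≤ (|x| + 2) ^ 2 + x := by nlinarith [abs_nonneg x, neg_abs_le x]
  rw [Ai_eq ht₀ hx, abs_mul]
  have h1 : |1 / π| ≤ 1 := by
    rw [abs_of_pos (by positivity : (0:ℝ) < 1 / π), div_le_one Real.pi_pos]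
    linarith [Real.pi_gt_three]
  have h2 := aiAux_bound ht₀ hx
  have h3 : 2 / ((|x| + 2) ^ 2 + x) ≤ 1 := by
    rw [div_le_one (by linarith)]
    linarith
  calc |1 / π| * |AiAux x (|x| + 2)| ≤ 1 * ((|x| + 2) + 2 / ((|x| + 2) ^ 2 + x)) :=
      mul_le_mul h1 h2 (abs_nonneg _) zero_le_one
    _ ≤ |x| + 3 := by linarith

/-- affine map details -/
lemma affine_embedding (b d : ℝ) (hb : b ≠ 0) :
    MeasurableEmbedding (fun w : ℝ => b * w + d) := by
  have h : (fun w : ℝ => b * w + d) = (fun y : ℝ => y + d) ∘ (fun w : ℝ => b * w) := rfl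
  rw [h]
  exact (Homeomorph.addRight d).measurableEmbedding.comp
    (Homeomorph.measurableEmbedding (Homeomorph.mulLeft₀ b hb))

lemma affine_map_volume (b d : ℝ) (hb : b ≠ 0) :
    Measure.map (fun w : ℝ => b * w + d) volume
      = ENNReal.ofReal |b⁻¹| • (volume : Measure ℝ) := by
  have h : (fun w : ℝ => b * w + d) = (fun y : ℝ => y + d) ∘ (fun w : ℝ => b * w) := rfl
  rw [h, ← Measure.map_map (by fun_prop) (by fun_prop)]
  rw [Real.map_volume_mul_left hb, Measure.map_smul]
  congr 1
  exact map_add_right_eq_self volume d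

lemma sub_key_preimage (a c : ℝ) (ha : 0 < a) :
    (fun w : ℝ => -a * w + (a + c)) ⁻¹' (Ici c) = Iic (1:ℝ) := by
  ext w
  simp only [mem_preimage, mem_Ici, mem_Iic]
  constructor
  · intro h; nlinarith
  · intro h; nlinarith

lemma sub_key_integral (f : ℝ → ℝ) (a c : ℝ) (ha : 0 < a) :
    (∫ w in Iic (1:ℝ), f (a * (1 - w) + c)) = a⁻¹ * ∫ u in Ici c, f u := by
  have hb : (-a : ℝ) ≠ 0 := by linarith
  have key := (affine_embedding (-a) (a + c) hb).setIntegral_map (μ := volume) f (Ici c)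
  rw [affine_map_volume (-a) (a + c) hb] at key
  rw [sub_key_preimage a c ha] at key
  have habs : |(-a : ℝ)⁻¹| = a⁻¹ := by
    rw [abs_inv, abs_neg, abs_of_pos ha]
  rw [habs] at key
  have h1 : ∫ u in Ici c, f u ∂(ENNReal.ofReal a⁻¹ • volume)
      = a⁻¹ * ∫ u in Ici c, f u := by
    rw [Measure.restrict_smul, integral_smul_measure, ENNReal.toReal_ofReal (by positivity)]
    rfl
  rw [h1] at key
  rw [key]
  apply setIntegral_congr_fun measurableSet_Iic
  intro w _
  show f (a * (1 - w) + c) = f (-a * w + (a + c))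
  have : a * (1 - w) + c = -a * w + (a + c) := by ring
  rw [this]

lemma sub_key_integrable (f : ℝ → ℝ) (a c : ℝ) (ha : 0 < a)
    (hf : IntegrableOn f (Ici c)) :
    IntegrableOn (fun w : ℝ => f (a * (1 - w) + c)) (Iic 1) := by
  have hb : (-a : ℝ) ≠ 0 := by linarith
  have key := (affine_embedding (-a) (a + c) hb).integrableOn_map_iff
    (f := f) (s := Ici c) (μ := volume)
  rw [affine_map_volume (-a) (a + c) hb, sub_key_preimage a c ha] at key
  have h2 : IntegrableOn f (Ici c) (ENNReal.ofReal |(-a : ℝ)⁻¹| • volume) := by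
    unfold IntegrableOn
    rw [Measure.restrict_smul]
    exact hf.smul_measure ENNReal.ofReal_ne_top
  have h3 := key.mp h2
  apply h3.congr_fun ?_ measurableSet_Iic
  intro w _
  simp only [Function.comp_apply]
  have : a * (1 - w) + c = -a * w + (a + c) := by ring
  rw [this]

noncomputable def Bmaj (u : ℝ) : ℝ := if 1 ≤ u then 4 / u ^ 2 else (|u| + 3) ^ 2

lemma Bmaj_nonneg (u : ℝ) : 0 ≤ Bmaj u := by
  unfold Bmaj
  split_ifs with h
  · positivity
  · positivity

lemma Bmaj_measurable : Measurable Bmaj := by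
  unfold Bmaj
  apply Measurable.ite (measurableSet_le measurable_const measurable_id)
  · fun_prop
  · fun_prop

lemma Ai_sq_le_Bmaj (u : ℝ) : Ai u ^ 2 ≤ Bmaj u := by
  unfold Bmaj
  split_ifs with h
  · have hu : 0 < u := lt_of_lt_of_le one_pos h
    have h1 : |Ai u| ≤ 2 / u := Ai_bound_pos hu
    have h2 : Ai u ^ 2 = |Ai u| ^ 2 := (sq_abs _).symm
    rw [h2]
    calc |Ai u| ^ 2 ≤ (2 / u) ^ 2 := by gcongr
      _ = 4 / u ^ 2 := by rw [div_pow]; norm_num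
  · have h1 : |Ai u| ≤ |u| + 3 := Ai_bound_all u
    rw [← sq_abs]
    gcongr

lemma Bmaj_integrable_Ici_one : IntegrableOn Bmaj (Ici (1:ℝ)) := by
  have hint : IntegrableOn (fun u : ℝ => 4 / u ^ 2) (Ioi (1:ℝ)) := by
    have hder : ∀ u ∈ Ici (1:ℝ), HasDerivAt (fun u : ℝ => -4 / u) (4 / u ^ 2) u := by
      intro u hu
      have hu0 : u ≠ 0 := by intro h; rw [h] at hu; norm_num at hu
      have := (hasDerivAt_inv hu0).const_mul (-4 : ℝ)
      have heq : (fun u : ℝ => -4 / u) = fun u : ℝ => -4 * u⁻¹ := by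
        funext v; rw [div_eq_mul_inv]
      rw [heq]
      refine this.congr_deriv ?_
      field_simp
    apply integrableOn_Ioi_deriv_of_nonneg
      ((hder 1 self_mem_Ici).continuousAt.continuousWithinAt)
      (fun u hu => hder u (Ioi_subset_Ici_self hu))
      (fun u hu => by
        have : (0:ℝ) < u := lt_trans one_pos hu
        positivity)
      (l := 0) ?_
    have : Tendsto (fun u : ℝ => -4 / u) atTop (𝓝 0) := by
      rw [show (0:ℝ) = -4 * 0 by ring]
      simp_rw [div_eq_mul_inv]
      exact tendsto_inv_atTop_zero.const_mul (-4)
    exact this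
  have : IntegrableOn Bmaj (Ioi (1:ℝ)) := by
    apply hint.congr_fun ?_ measurableSet_Ioi
    intro u hu
    unfold Bmaj
    rw [if_pos (le_of_lt hu)]
  rwa [integrableOn_Ici_iff_integrableOn_Ioi]

lemma Bmaj_integrable_Ici (c : ℝ) : IntegrableOn Bmaj (Ici c) := by
  rcases le_or_gt 1 c with hc | hc
  · exact Bmaj_integrable_Ici_one.mono_set (Ici_subset_Ici.mpr hc)
  · have h1 : IntegrableOn Bmaj (Icc c 1) := by
      apply Measure.integrableOn_of_bounded (M := (|c| + 4) ^ 2)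
        (by rw [Real.volume_Icc]; exact ENNReal.ofReal_ne_top)
        Bmaj_measurable.aestronglyMeasurable
      filter_upwards [ae_restrict_mem measurableSet_Icc] with u hu
      rw [Real.norm_eq_abs, abs_of_nonneg (Bmaj_nonneg u)]
      unfold Bmaj
      have hu1 : u ≤ 1 := hu.2
      have hcu : c ≤ u := hu.1
      have habs : |u| ≤ |c| + 1 := by
        rw [abs_le]
        constructor
        · calc -(|c| + 1) ≤ -|c| := by linarith
            _ ≤ c := neg_abs_le c
            _ ≤ u := hcu
        · linarith [abs_nonneg c]
      split_ifs with h
      · have hu' : u = 1 := le_antisymm hu1 h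
        rw [hu']
        nlinarith [abs_nonneg c]
      · nlinarith [abs_nonneg c, abs_nonneg u]
    have hsub : Ici c ⊆ Icc c 1 ∪ Ici 1 := by
      intro u hu
      rcases le_or_gt u 1 with h | h
      · exact Or.inl ⟨hu, h⟩
      · exact Or.inr (le_of_lt h)
    exact (h1.union Bmaj_integrable_Ici_one).mono_set hsub

/-- Hilbert–Schmidt bound for the factor `G₁`: for every `m` there is `C > 0` such that
for all `L ≥ 1`,
`∫_{−∞}^0 ∫_{−∞}^1 e^{2(λ−m)L} Ai(L²(1−w)+m−λ)² dw dλ ≤ C e^{−2mL}`. -/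
theorem G1_bound (m : ℝ) :
    ∃ C : ℝ, 0 < C ∧ ∀ L : ℝ, 1 ≤ L →
      (∫ lam in Set.Iic (0:ℝ), ∫ w in Set.Iic (1:ℝ),
          Real.exp (2 * (lam - m) * L) * Ai (L ^ 2 * (1 - w) + m - lam) ^ 2)
        ≤ C * Real.exp (-2 * m * L) := by
  set K := ∫ u in Ici m, Bmaj u with hK
  have hK0 : 0 ≤ K := setIntegral_nonneg measurableSet_Ici fun u _ => Bmaj_nonneg u
  refine ⟨K + 1, by linarith, ?_⟩
  intro L hL
  have hL2 : (0:ℝ) < L ^ 2 := by positivity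
  have hL21 : (1:ℝ) ≤ L ^ 2 := by nlinarith
  have inner_le : ∀ lam : ℝ, lam ≤ 0 →
      (∫ w in Set.Iic (1:ℝ),
          Real.exp (2 * (lam - m) * L) * Ai (L ^ 2 * (1 - w) + m - lam) ^ 2)
        ≤ Real.exp (-2 * m * L) * Real.exp lam * K := by
    intro lam hlam
    set c := m - lam with hc
    have hcm : m ≤ c := by rw [hc]; linarith
    have harg : ∀ w : ℝ, L ^ 2 * (1 - w) + m - lam = L ^ 2 * (1 - w) + c := by
      intro w; rw [hc]; ring
    have hBint : IntegrableOn (fun w => Bmaj (L ^ 2 * (1 - w) + c)) (Iic 1) :=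
      sub_key_integrable Bmaj (L ^ 2) c hL2 (Bmaj_integrable_Ici c)
    have h1 : (∫ w in Set.Iic (1:ℝ),
          Real.exp (2 * (lam - m) * L) * Ai (L ^ 2 * (1 - w) + m - lam) ^ 2)
        = Real.exp (2 * (lam - m) * L)
          * ∫ w in Set.Iic (1:ℝ), Ai (L ^ 2 * (1 - w) + m - lam) ^ 2 :=
      integral_const_mul _ _
    have h2 : (∫ w in Set.Iic (1:ℝ), Ai (L ^ 2 * (1 - w) + m - lam) ^ 2)
        ≤ ∫ w in Set.Iic (1:ℝ), Bmaj (L ^ 2 * (1 - w) + c) := by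
      apply integral_mono_of_nonneg (Eventually.of_forall fun w => sq_nonneg _) hBint
      apply Eventually.of_forall
      intro w
      show Ai (L ^ 2 * (1 - w) + m - lam) ^ 2 ≤ Bmaj (L ^ 2 * (1 - w) + c)
      rw [harg w]
      exact Ai_sq_le_Bmaj _
    have h3 : (∫ w in Set.Iic (1:ℝ), Bmaj (L ^ 2 * (1 - w) + c))
        = (L ^ 2)⁻¹ * ∫ u in Ici c, Bmaj u := sub_key_integral Bmaj (L ^ 2) c hL2
    have h4 : (∫ u in Ici c, Bmaj u) ≤ K := by
      apply setIntegral_mono_set (Bmaj_integrable_Ici m)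
        (Eventually.of_forall fun u => Bmaj_nonneg u)
        (HasSubset.Subset.eventuallyLE (Ici_subset_Ici.mpr hcm))
    have h5 : (L ^ 2)⁻¹ ≤ 1 := by
      rw [inv_le_one_iff₀]; right; exact hL21
    have h6 : Real.exp (2 * (lam - m) * L)
        = Real.exp (-2 * m * L) * Real.exp (2 * L * lam) := by
      rw [← Real.exp_add]; ring_nf
    have h7 : Real.exp (2 * L * lam) ≤ Real.exp lam := by
      apply Real.exp_le_exp.mpr
      nlinarith
    have hIb : (0:ℝ) ≤ ∫ u in Ici c, Bmaj u :=
      setIntegral_nonneg measurableSet_Ici fun u _ => Bmaj_nonneg u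
    calc (∫ w in Set.Iic (1:ℝ),
          Real.exp (2 * (lam - m) * L) * Ai (L ^ 2 * (1 - w) + m - lam) ^ 2)
        = Real.exp (2 * (lam - m) * L)
          * ∫ w in Set.Iic (1:ℝ), Ai (L ^ 2 * (1 - w) + m - lam) ^ 2 := h1
      _ ≤ Real.exp (2 * (lam - m) * L) * ((L ^ 2)⁻¹ * ∫ u in Ici c, Bmaj u) := by
          rw [← h3]
          exact mul_le_mul_of_nonneg_left h2 (Real.exp_pos _).le
      _ ≤ Real.exp (2 * (lam - m) * L) * (1 * K) := by
          apply mul_le_mul_of_nonneg_left ?_ (Real.exp_pos _).le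
          exact mul_le_mul h5 h4 hIb zero_le_one
      _ = Real.exp (-2 * m * L) * Real.exp (2 * L * lam) * K := by rw [h6]; ring
      _ ≤ Real.exp (-2 * m * L) * Real.exp lam * K := by
          apply mul_le_mul_of_nonneg_right ?_ hK0
          exact mul_le_mul_of_nonneg_left h7 (Real.exp_pos _).le
  have g_int : IntegrableOn
      (fun lam : ℝ => Real.exp (-2 * m * L) * Real.exp lam * K) (Iic 0) := by
    exact ((integrableOn_exp_Iic 0).const_mul (Real.exp (-2 * m * L))).mul_const K
  have outer_le : (∫ lam in Set.Iic (0:ℝ), ∫ w in Set.Iic (1:ℝ),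
        Real.exp (2 * (lam - m) * L) * Ai (L ^ 2 * (1 - w) + m - lam) ^ 2)
      ≤ ∫ lam in Set.Iic (0:ℝ), Real.exp (-2 * m * L) * Real.exp lam * K := by
    apply integral_mono_of_nonneg
      (Eventually.of_forall fun lam =>
        integral_nonneg fun w => mul_nonneg (Real.exp_pos _).le (sq_nonneg _))
      g_int
    filter_upwards [ae_restrict_mem measurableSet_Iic] with lam hlam
    exact inner_le lam hlam
  have hval : (∫ lam in Set.Iic (0:ℝ), Real.exp (-2 * m * L) * Real.exp lam * K)
      = Real.exp (-2 * m * L) * K := by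
    have heq : (fun lam : ℝ => Real.exp (-2 * m * L) * Real.exp lam * K)
        = fun lam : ℝ => (Real.exp (-2 * m * L) * K) * Real.exp lam := by
      funext lam; ring
    rw [heq, integral_const_mul, integral_exp_Iic, Real.exp_zero, mul_one]
  rw [hval] at outer_le
  apply outer_le.trans
  have := (Real.exp_pos (-2 * m * L)).le
  nlinarith
end
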